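/- Let Σ be a finite alphabet, p ∈ Σ* a fixed word, and L = p·Σ^{≥2} (words extending p by at least two letters). If u is a prefix of p and u ∼_L u' (syntactic congruence with respect to L), then u = u'. -/

import Mathlib

/-- Syntactic congruence of a language `L ⊆ Σ*`. -/
def SynCong {α : Type*} (L : Set (List α)) (u v : List α) : Prop :=
  ∀ x y : List α, (x ++ u ++ y) ∈ L ↔ (x ++ v ++ y) ∈ L

/-- `p·Σ⁺`: words strictly extending `p`. -/
def plusLang {α : Type*} (p : List α) : Set (List α) :=
  {w | ∃ s : List α, s ≠ [] ∧ w = p ++ s}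

/-- `p·Σ^{≥2}`: words extending `p` by at least two letters. -/
def geTwoLang {α : Type*} (p : List α) : Set (List α) :=
  {w | ∃ s : List α, 2 ≤ s.length ∧ w = p ++ s}

/-- `w·Σ*`: words having `w` as a prefix. -/
def starLang {α : Type*} (w : List α) : Set (List α) :=
  {u | ∃ s : List α, u = w ++ s}

theorem stmt1 {α : Type*} [Fintype α] [Nonempty α] (p u u' : List α)
    (hu : u <+: p) (hcong : SynCong (geTwoLang p) u u') : u = u' := by
  obtain ⟨t, hp⟩ := hu
  obtain ⟨a⟩ := ‹Nonempty α›
  -- u ++ t ++ [a,a] = p ++ [a,a] ∈ L, so u' ++ t ++ [a,a] ∈ L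
  have h2 : u' ++ (t ++ [a, a]) ∈ geTwoLang p := by
    have := (hcong [] (t ++ [a, a])).mp
    simp only [List.nil_append] at this
    apply this
    exact ⟨[a, a], by simp, by rw [← List.append_assoc, hp]⟩
  -- u ++ t ++ [a] = p ++ [a] ∉ L, so u' ++ t ++ [a] ∉ L
  have h1 : u' ++ (t ++ [a]) ∉ geTwoLang p := by
    have := (hcong [] (t ++ [a])).mpr
    simp only [List.nil_append] at this
    intro hmem
    obtain ⟨s, hs2, hseq⟩ := this hmem
    rw [← List.append_assoc, hp] at hseq
    have := congrArg List.length hseq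
    simp at this
    omega
  obtain ⟨s, hs2, hseq⟩ := h2
  rw [← List.append_assoc] at hseq
  -- show |s| = 2
  have hslen : s.length = 2 := by
    by_contra hne
    have hs3 : 3 ≤ s.length := by omega
    apply h1
    refine ⟨s.dropLast, ?_, ?_⟩
    · rw [List.length_dropLast]; omega
    · have hd := congrArg List.dropLast hseq
      have hsne : s ≠ [] := by rintro rfl; simp at hs3
      rw [List.dropLast_append_of_ne_nil hsne,
        List.dropLast_append_of_ne_nil (by simp : ([a,a]:List α) ≠ [])] at hd
      simpa using hd
  -- lengths force u' ++ t = p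
  have hlen := congrArg List.length hseq
  simp at hlen
  have hwp : u' ++ t = p := by
    have := List.append_inj hseq (by simp; omega)
    exact this.1
  rw [← hp] at hwp
  exact List.append_cancel_right hwp.symm
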